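/- Let α > 0, ρ > 0, and let F : L²_ρ(ℝ;H) → L²_ρ(ℝ;H) be Lipschitz continuous with Lipschitz constant L satisfying L < ρ^α. Then there exists exactly one u ∈ dom(∂_{0,ρ}^α) ⊆ L²_ρ(ℝ;H) such that ∂_{0,ρ}^α u = F(u). -/

import Mathlib

open MeasureTheory Filter Topology
open scoped ENNReal NNReal

/-- `u ∈ dom(∂_{0,ρ}^α)` and `∂_{0,ρ}^α u = w` in `L²_ρ(ℝ;H)`, where
`∂_{0,ρ}^α = L_ρ^* ∘ M_α ∘ L_ρ`, `L_ρ = 𝓕 ∘ e^{-ρm}` and `M_α` is multiplication by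
`ξ ↦ (iξ+ρ)^α` (principal branch) with maximal domain. -/
def FracDerivEq {H : Type*} [NormedAddCommGroup H] [InnerProductSpace ℂ H]
    [CompleteSpace H]
    (𝓕 : Lp H 2 (volume : Measure ℝ) ≃ₗᵢ[ℂ] Lp H 2 (volume : Measure ℝ))
    (ρ α : ℝ) (u w : ℝ → H) : Prop :=
  ∃ (hu : MemLp (fun t : ℝ => Real.exp (-(ρ * t)) • u t) 2 volume)
    (hm : MemLp (fun ξ : ℝ =>
      ((Complex.I * ξ + ρ) ^ (α : ℂ)) • (𝓕 (hu.toLp _) : ℝ → H) ξ) 2 volume),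
    (𝓕.symm (hm.toLp _) : ℝ → H) =ᵐ[volume]
      fun t : ℝ => Real.exp (-(ρ * t)) • w t

private lemma st15_re (ρ ξ : ℝ) : (Complex.I * ξ + ρ : ℂ).re = ρ := by
  simp

private lemma st15_ne {ρ : ℝ} (hρ : 0 < ρ) (ξ : ℝ) : (Complex.I * ξ + ρ : ℂ) ≠ 0 := by
  intro h
  have := congrArg Complex.re h
  rw [st15_re] at this
  simp at this
  linarith

private lemma st15_abs {ρ : ℝ} (hρ : 0 < ρ) (ξ : ℝ) :
    ρ ≤ ‖(Complex.I * ξ + ρ : ℂ)‖ := by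
  have h := Complex.abs_re_le_norm (Complex.I * ξ + ρ)
  rw [st15_re, abs_of_pos hρ] at h
  exact h

private lemma st15_norm {ρ : ℝ} (hρ : 0 < ρ) (β ξ : ℝ) :
    ‖(Complex.I * ξ + ρ : ℂ) ^ ((β : ℝ) : ℂ)‖ = ‖(Complex.I * ξ + ρ : ℂ)‖ ^ β := by
  rw [Complex.norm_cpow_of_ne_zero (st15_ne hρ ξ)]
  simp

private lemma st15_bound {ρ α : ℝ} (hρ : 0 < ρ) (hα : 0 < α) (ξ : ℝ) :
    ‖(Complex.I * ξ + ρ : ℂ) ^ ((-α : ℝ) : ℂ)‖ ≤ ρ ^ (-α) := by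
  rw [st15_norm hρ]
  exact Real.rpow_le_rpow_of_nonpos hρ (st15_abs hρ ξ) (neg_nonpos.2 hα.le)

private lemma st15_mul {ρ : ℝ} (α : ℝ) (hρ : 0 < ρ) (ξ : ℝ) :
    ((Complex.I * ξ + ρ : ℂ) ^ (α : ℂ)) * ((Complex.I * ξ + ρ : ℂ) ^ ((-α : ℝ) : ℂ)) = 1 := by
  rw [Complex.ofReal_neg, Complex.cpow_neg]
  refine mul_inv_cancel₀ ?_
  rw [Ne, Complex.cpow_eq_zero_iff]
  rintro ⟨h, -⟩
  exact st15_ne hρ ξ h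

private lemma st15_cont {ρ : ℝ} (hρ : 0 < ρ) (β : ℝ) :
    Continuous (fun ξ : ℝ => (Complex.I * ξ + ρ : ℂ) ^ ((β : ℝ) : ℂ)) := by
  rw [continuous_iff_continuousAt]
  intro ξ
  refine ContinuousAt.cpow (by fun_prop) continuousAt_const ?_
  rw [Complex.mem_slitPlane_iff, st15_re]
  exact Or.inl hρ

set_option maxHeartbeats 1000000 in
/-- let `α > 0`, `ρ > 0` and let `F : L²_ρ(ℝ;H) → L²_ρ(ℝ;H)` be
Lipschitz with constant `L < ρ^α` (here `F` is given on representatives: it maps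
`L²_ρ` into `L²_ρ`, respects a.e. equality, and is `L`-Lipschitz for the `L²_ρ`
norm).  Then there is exactly one `u ∈ dom(∂_{0,ρ}^α)` with `∂_{0,ρ}^α u = F(u)`
(uniqueness up to a.e. equality). -/
theorem stmt15
    {H : Type*} [NormedAddCommGroup H] [InnerProductSpace ℂ H] [CompleteSpace H]
    (𝓕 : Lp H 2 (volume : Measure ℝ) ≃ₗᵢ[ℂ] Lp H 2 (volume : Measure ℝ))
    (h𝓕 : ∀ (g : ℝ → H) (_ : Integrable g volume) (hg : MemLp g 2 volume),
      (𝓕 (hg.toLp g) : ℝ → H) =ᵐ[volume]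
        fun ξ : ℝ => (Real.sqrt (2 * Real.pi))⁻¹ •
          ∫ t : ℝ, Complex.exp (-(Complex.I * ξ * t)) • g t)
    (α ρ L : ℝ) (hα : 0 < α) (hρ : 0 < ρ) (hL : 0 ≤ L) (hLρ : L < ρ ^ α)
    (F : (ℝ → H) → (ℝ → H))
    (hmap : ∀ u : ℝ → H, MemLp (fun t : ℝ => Real.exp (-(ρ * t)) • u t) 2 volume →
      MemLp (fun t : ℝ => Real.exp (-(ρ * t)) • F u t) 2 volume)
    (hcong : ∀ u v : ℝ → H,
      MemLp (fun t : ℝ => Real.exp (-(ρ * t)) • u t) 2 volume →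
      u =ᵐ[volume] v → F u =ᵐ[volume] F v)
    (hlip : ∀ u v : ℝ → H,
      MemLp (fun t : ℝ => Real.exp (-(ρ * t)) • u t) 2 volume →
      MemLp (fun t : ℝ => Real.exp (-(ρ * t)) • v t) 2 volume →
      eLpNorm (fun t : ℝ => Real.exp (-(ρ * t)) • (F u t - F v t)) 2 volume ≤
        ENNReal.ofReal L *
          eLpNorm (fun t : ℝ => Real.exp (-(ρ * t)) • (u t - v t)) 2 volume) :
    ∃ u : ℝ → H, FracDerivEq 𝓕 ρ α u (F u) ∧
      ∀ v : ℝ → H, FracDerivEq 𝓕 ρ α v (F v) → v =ᵐ[volume] u := by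
  classical
  let E := Lp H 2 (volume : Measure ℝ)
  let U : (ℝ → H) → (ℝ → H) := fun f t => Real.exp (ρ * t) • f t
  have hUf : ∀ f : E, (fun t : ℝ => Real.exp (-(ρ * t)) • U (⇑f) t) = ⇑f := by
    intro f; funext t
    show Real.exp (-(ρ * t)) • Real.exp (ρ * t) • f t = f t
    rw [smul_smul, ← Real.exp_add, neg_add_cancel, Real.exp_zero, one_smul]
  have memA : ∀ f : E, MemLp (fun t : ℝ => Real.exp (-(ρ * t)) • U (⇑f) t) 2 volume := by
    intro f; rw [hUf f]; exact Lp.memLp f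
  let g : E → E := fun f => ((hmap (U ⇑f) (memA f)).toLp _)
  have hgco : ∀ f : E, ⇑(g f) =ᵐ[volume] fun t : ℝ => Real.exp (-(ρ * t)) • F (U ⇑f) t :=
    fun f => MemLp.coeFn_toLp _
  have memMi : ∀ x : E,
      MemLp (fun ξ : ℝ => ((Complex.I * ξ + ρ) ^ ((-α : ℝ) : ℂ)) • (x : ℝ → H) ξ) 2 volume := by
    intro x
    refine MemLp.of_le_mul (c := ρ ^ (-α)) (Lp.memLp x)
      (((st15_cont hρ (-α)).aestronglyMeasurable).smul (Lp.aestronglyMeasurable x))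
      (ae_of_all _ fun ξ => ?_)
    rw [norm_smul]
    exact mul_le_mul_of_nonneg_right (st15_bound hρ hα ξ) (norm_nonneg _)
  let Mi : E → E := fun x => (memMi x).toLp _
  have hMico : ∀ x : E, ⇑(Mi x) =ᵐ[volume]
      fun ξ : ℝ => ((Complex.I * ξ + ρ) ^ ((-α : ℝ) : ℂ)) • (x : ℝ → H) ξ :=
    fun x => MemLp.coeFn_toLp _
  let G : E → E := fun f => 𝓕.symm (Mi (𝓕 (g f)))
  -- Lipschitz estimate for Mi
  have hMi_lip : ∀ x y : E,
      edist (Mi x) (Mi y) ≤ ((ρ ^ (-α)).toNNReal : ℝ≥0∞) * edist x y := by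
    intro x y
    rw [Lp.edist_def, Lp.edist_def]
    have h1 : ⇑(Mi x) - ⇑(Mi y) =ᵐ[volume]
        fun ξ : ℝ => ((Complex.I * ξ + ρ) ^ ((-α : ℝ) : ℂ)) • ((x : ℝ → H) ξ - (y : ℝ → H) ξ) := by
      filter_upwards [hMico x, hMico y] with ξ h1 h2
      simp only [Pi.sub_apply, h1, h2, smul_sub]
    rw [eLpNorm_congr_ae h1]
    have h2 := eLpNorm_le_nnreal_smul_eLpNorm_of_ae_le_mul
      (f := fun ξ : ℝ => ((Complex.I * ξ + ρ) ^ ((-α : ℝ) : ℂ)) • ((x : ℝ → H) ξ - (y : ℝ → H) ξ))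
      (g := ⇑x - ⇑y) (c := (ρ ^ (-α)).toNNReal) (μ := volume)
      (ae_of_all _ fun ξ => ?_) 2
    · simpa [ENNReal.smul_def] using h2
    · show ‖_‖₊ ≤ _ * ‖(x : ℝ → H) ξ - (y : ℝ → H) ξ‖₊
      rw [nnnorm_smul]
      refine mul_le_mul_of_nonneg_right ?_ zero_le
      rw [← norm_toNNReal]
      exact Real.toNNReal_le_toNNReal (st15_bound hρ hα ξ)
  have hg_lip : ∀ f f' : E, edist (g f) (g f') ≤ ENNReal.ofReal L * edist f f' := by
    intro f f'
    rw [Lp.edist_def, Lp.edist_def]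
    have h1 : ⇑(g f) - ⇑(g f') =ᵐ[volume]
        fun t : ℝ => Real.exp (-(ρ * t)) • (F (U ⇑f) t - F (U ⇑f') t) := by
      filter_upwards [hgco f, hgco f'] with t h1 h2
      simp only [Pi.sub_apply, h1, h2, smul_sub]
    rw [eLpNorm_congr_ae h1]
    refine (hlip (U ⇑f) (U ⇑f') (memA f) (memA f')).trans ?_
    have h3 : (fun t : ℝ => Real.exp (-(ρ * t)) • (U ⇑f t - U ⇑f' t)) = ⇑f - ⇑f' := by
      funext t
      show Real.exp (-(ρ * t)) • (Real.exp (ρ * t) • f t - Real.exp (ρ * t) • f' t) = _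
      rw [← smul_sub, smul_smul, ← Real.exp_add, neg_add_cancel, Real.exp_zero, one_smul]
      rfl
    rw [h3]
  set K : ℝ≥0 := (ρ ^ (-α)).toNNReal * L.toNNReal with hKdef
  have hGlip : LipschitzWith K G := by
    intro f f'
    have e1 : edist (G f) (G f') = edist (Mi (𝓕 (g f))) (Mi (𝓕 (g f'))) :=
      𝓕.symm.isometry.edist_eq _ _
    have e3 : edist (𝓕 (g f)) (𝓕 (g f')) = edist (g f) (g f') := 𝓕.isometry.edist_eq _ _
    calc edist (G f) (G f') = edist (Mi (𝓕 (g f))) (Mi (𝓕 (g f'))) := e1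
      _ ≤ ((ρ ^ (-α)).toNNReal : ℝ≥0∞) * edist (𝓕 (g f)) (𝓕 (g f')) := hMi_lip _ _
      _ = ((ρ ^ (-α)).toNNReal : ℝ≥0∞) * edist (g f) (g f') := by rw [e3]
      _ ≤ ((ρ ^ (-α)).toNNReal : ℝ≥0∞) * (ENNReal.ofReal L * edist f f') := by
          exact mul_le_mul_right (hg_lip f f') _
      _ = (K : ℝ≥0∞) * edist f f' := by
          rw [hKdef, ENNReal.coe_mul, mul_assoc]
          rfl
  have hK : K < 1 := by
    rw [hKdef, ← NNReal.coe_lt_coe, NNReal.coe_mul, NNReal.coe_one,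
        Real.coe_toNNReal _ (Real.rpow_nonneg hρ.le _), Real.coe_toNNReal _ hL,
        Real.rpow_neg hρ.le, inv_mul_eq_div]
    exact (div_lt_one (Real.rpow_pos_of_pos hρ α)).2 hLρ
  have hG : ContractingWith K G := ⟨hK, hGlip⟩
  haveI : Nonempty E := ⟨0⟩
  let f₀ : E := ContractingWith.fixedPoint G hG
  have hfix : G f₀ = f₀ := hG.fixedPoint_isFixedPt
  have hfix' : 𝓕 f₀ = Mi (𝓕 (g f₀)) := by
    conv_lhs => rw [← hfix]
    exact 𝓕.apply_symm_apply _
  have hcoe : ⇑(𝓕 f₀) =ᵐ[volume]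
      fun ξ : ℝ => ((Complex.I * ξ + ρ) ^ ((-α : ℝ) : ℂ)) • ((𝓕 (g f₀) : ℝ → H) ξ) := by
    rw [hfix']; exact hMico _
  have keyae : ⇑(𝓕 (g f₀)) =ᵐ[volume]
      fun ξ : ℝ => ((Complex.I * ξ + ρ) ^ (α : ℂ)) • (𝓕 f₀ : ℝ → H) ξ := by
    filter_upwards [hcoe] with ξ hξ
    rw [hξ, smul_smul, st15_mul α hρ ξ, one_smul]
  refine ⟨U ⇑f₀, ?_, ?_⟩
  · refine ⟨memA f₀, ?_⟩
    have htoLp : (memA f₀).toLp _ = f₀ := by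
      refine Lp.ext ((MemLp.coeFn_toLp _).trans ?_)
      rw [hUf f₀]
    rw [htoLp]
    have hm' : MemLp (fun ξ : ℝ =>
        ((Complex.I * ξ + ρ) ^ (α : ℂ)) • (𝓕 f₀ : ℝ → H) ξ) 2 volume :=
      MemLp.ae_eq keyae (Lp.memLp _)
    refine ⟨hm', ?_⟩
    have htoLp2 : hm'.toLp _ = 𝓕 (g f₀) :=
      Lp.ext ((MemLp.coeFn_toLp _).trans keyae.symm)
    rw [htoLp2, LinearIsometryEquiv.symm_apply_apply]
    exact hgco f₀
  · rintro v ⟨hv, hmv, heqv⟩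
    let fv : E := hv.toLp _
    have hvco : ⇑fv =ᵐ[volume] fun t : ℝ => Real.exp (-(ρ * t)) • v t := MemLp.coeFn_toLp _
    have hUv : U ⇑fv =ᵐ[volume] v := by
      filter_upwards [hvco] with t ht
      show Real.exp (ρ * t) • fv t = v t
      rw [ht, smul_smul, ← Real.exp_add, add_neg_cancel, Real.exp_zero, one_smul]
    have hFveq : F (U ⇑fv) =ᵐ[volume] F v := hcong (U ⇑fv) v (memA fv) hUv
    have hgv : g fv = 𝓕.symm (hmv.toLp _) := by
      refine Lp.ext ((hgco fv).trans (EventuallyEq.trans ?_ heqv.symm))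
      filter_upwards [hFveq] with t ht
      rw [ht]
    have hcoe2 : ⇑(𝓕 (g fv)) =ᵐ[volume]
        fun ξ : ℝ => ((Complex.I * ξ + ρ) ^ (α : ℂ)) • (𝓕 fv : ℝ → H) ξ := by
      rw [hgv, LinearIsometryEquiv.apply_symm_apply]
      exact MemLp.coeFn_toLp _
    have hfixv : G fv = fv := by
      have h1 : Mi (𝓕 (g fv)) = 𝓕 fv := by
        refine Lp.ext ((hMico _).trans ?_)
        filter_upwards [hcoe2] with ξ hξ
        rw [hξ, smul_smul, mul_comm, st15_mul α hρ ξ, one_smul]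
      show 𝓕.symm (Mi (𝓕 (g fv))) = fv
      rw [h1, LinearIsometryEquiv.symm_apply_apply]
    have hfveq : fv = f₀ := hG.fixedPoint_unique hfixv
    rw [hfveq] at hUv
    exact hUv.symm
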